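/- Branch independence of the construction of F: let α ∈ ℤ and let g : ℝ³ → ℝ³ satisfy (I) g(x + c) = g(x) + α·c for every x ∈ ℝ³ and c ∈ {(4,0,0), (0,4,0)}, and (II) g(R_{(2,2)}(x)) = R_{(2,2)}(g(x)) for every x ∈ ℝ³. Let T(x) = x - (1,1,0). Then for all a, b ∈ ℝ³ with Z(a) = Z(b), one has Z(T(g(T⁻¹(a)))) = Z(T(g(T⁻¹(b)))), where T⁻¹(x) = x + (1,1,0). -/

import Mathlib

/-- Explicit vector in ℝ³ (with the Euclidean norm). -/
def vec3 (a b c : ℝ) : EuclideanSpace ℝ (Fin 3) := !₂[a, b, c]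

/-- The 4-periodic sawtooth: h(t) = t on [-1,1], h(t) = 2 - t on [1,3]. -/
noncomputable def h (t : ℝ) : ℝ := 1 - |4 * Int.fract ((t + 1) / 4) - 2|

/-- The sign function ε(t) = (-1)^⌊(t+1)/2⌋. -/
noncomputable def eps (t : ℝ) : ℝ := (-1 : ℝ) ^ ⌊(t + 1) / 2⌋

/-- The Zorich-type map Z : ℝ³ → ℝ³. -/
noncomputable def Z (x : EuclideanSpace ℝ (Fin 3)) : EuclideanSpace ℝ (Fin 3) :=
  Real.exp (x 2) •
    vec3 (h (x 0)) (h (x 1)) (eps (x 0) * eps (x 1) * (1 - max |h (x 0)| |h (x 1)|))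

/-- Rotation by π about the vertical line {(u,v,t) : t ∈ ℝ}. -/
noncomputable def Rot (u v : ℝ) (x : EuclideanSpace ℝ (Fin 3)) : EuclideanSpace ℝ (Fin 3) :=
  vec3 (2 * u - x 0) (2 * v - x 1) (x 2)

/- ## Auxiliary lemmas about h and eps -/

lemma habs (t : ℝ) : |h t| ≤ 1 := by
  have h1 := Int.fract_nonneg ((t+1)/4)
  have h2 := Int.fract_lt_one ((t+1)/4)
  have h3 : |4 * Int.fract ((t + 1) / 4) - 2| ≤ 2 := abs_le.mpr ⟨by linarith, by linarith⟩
  have h4 := abs_nonneg (4 * Int.fract ((t + 1) / 4) - 2)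
  rw [h, abs_le]; constructor <;> linarith

lemma h_add4 (t : ℝ) (k : ℤ) : h (t + 4*k) = h t := by
  have : (t + 4*k + 1)/4 = (t+1)/4 + k := by ring
  rw [h, this, Int.fract_add_intCast, h]

lemma eps_add4 (t : ℝ) (k : ℤ) : eps (t + 4*k) = eps t := by
  have : (t + 4*k + 1)/2 = (t+1)/2 + (2*k : ℤ) := by push_cast; ring
  rw [eps, this, Int.floor_add_intCast, eps, zpow_add₀ (by norm_num : (-1:ℝ) ≠ 0)]
  rw [zpow_mul]
  norm_num

lemma h_two_sub (t : ℝ) : h (2 - t) = h t := by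
  have e : (2 - t + 1)/4 = -((t+1)/4) + ((1:ℤ):ℝ) := by push_cast; ring
  rw [h, e, Int.fract_add_intCast, h]
  rcases eq_or_ne (Int.fract ((t+1)/4)) 0 with h0 | h0
  · rw [show -((t+1)/4) = ((-⌊(t+1)/4⌋ : ℤ):ℝ) by push_cast; rw [Int.fract] at h0; linarith, h0]
    rw [Int.fract_intCast]
  · rw [Int.fract_neg h0]
    rw [show 4 * (1 - Int.fract ((t+1)/4)) - 2 = -(4 * Int.fract ((t+1)/4) - 2) by ring, abs_neg]

lemma odd_of_h {t : ℝ} (ht : |h t| = 1) : ∃ n : ℤ, t = 2*n + 1 := by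
  have h1 := Int.fract_nonneg ((t+1)/4)
  have h2 := Int.fract_lt_one ((t+1)/4)
  have hf : (t+1)/4 = ⌊(t+1)/4⌋ + Int.fract ((t+1)/4) := by rw [Int.fract]; ring
  rw [h] at ht
  rcases (abs_eq (by norm_num : (0:ℝ) ≤ 1)).mp ht with h3 | h3
  · have h4 : |4 * Int.fract ((t + 1) / 4) - 2| = 0 := by linarith
    have h5 : Int.fract ((t+1)/4) = 1/2 := by
      have := abs_eq_zero.mp h4; linarith
    exact ⟨2*⌊(t+1)/4⌋, by push_cast; rw [h5] at hf; linarith⟩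
  · have h4 : |4 * Int.fract ((t + 1) / 4) - 2| = 2 := by linarith
    rcases (abs_eq (by norm_num : (0:ℝ) ≤ 2)).mp h4 with h5 | h5
    · linarith
    · have h6 : Int.fract ((t+1)/4) = 0 := by linarith
      exact ⟨2*⌊(t+1)/4⌋ - 1, by push_cast; rw [h6] at hf; linarith⟩

lemma h_of_odd {t : ℝ} (n : ℤ) (ht : t = 2*n + 1) : |h t| = 1 := by
  rcases Int.even_or_odd n with ⟨m, hm⟩ | ⟨m, hm⟩
  · have e : (t+1)/4 = (m:ℝ) + 1/2 := by rw [ht, hm]; push_cast; ring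
    have : Int.fract ((t+1)/4) = 1/2 := by
      rw [e, add_comm, Int.fract_add_intCast, Int.fract_eq_self.mpr (by norm_num)]
    rw [h, this]; norm_num
  · have e : (t+1)/4 = ((m+1:ℤ):ℝ) := by rw [ht, hm]; push_cast; ring
    have : Int.fract ((t+1)/4) = 0 := by rw [e, Int.fract_intCast]
    rw [h, this]; norm_num

lemma eps_sq (t : ℝ) : eps t * eps t = 1 := by
  rw [eps, ← zpow_add₀ (by norm_num : (-1:ℝ) ≠ 0), ← two_mul, zpow_mul]
  norm_num

lemma eps_abs (t : ℝ) : |eps t| = 1 := by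
  have h1 := eps_sq t
  have h2 : |eps t| * |eps t| = 1 := by rw [← abs_mul, h1, abs_one]
  nlinarith [abs_nonneg (eps t)]

lemma eps_two_sub {t : ℝ} (ht : |h t| < 1) : eps (2 - t) = -eps t := by
  set n := ⌊(t+1)/2⌋ with hn
  have hfl : (n:ℝ) ≤ (t+1)/2 := Int.floor_le _
  have hlt : (t+1)/2 < n + 1 := Int.lt_floor_add_one _
  have hne : (t+1)/2 ≠ (n:ℝ) := by
    intro hc
    have : t = 2*((n-1:ℤ):ℝ) + 1 := by push_cast; linarith
    exact absurd (h_of_odd (n-1) this) (by linarith)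
  have hfloor : ⌊(2 - t + 1)/2⌋ = 1 - n := by
    rw [show (2 - t + 1)/2 = -((t+1)/2) + ((2:ℤ):ℝ) by push_cast; ring, Int.floor_add_intCast]
    have : ⌊-((t+1)/2)⌋ = -n - 1 := by
      apply Int.floor_eq_iff.mpr
      constructor
      · push_cast; linarith
      · push_cast
        rcases lt_or_eq_of_le hfl with h' | h'
        · linarith
        · exact absurd h'.symm hne
    rw [this]; ring
  rw [eps, hfloor, eps, ← hn]
  have hsq : ((-1:ℝ)^n) * ((-1:ℝ)^n) = 1 := by
    rw [← zpow_add₀ (by norm_num : (-1:ℝ) ≠ 0), ← two_mul, zpow_mul]; norm_num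
  rw [zpow_sub₀ (by norm_num : (-1:ℝ) ≠ 0), div_eq_mul_inv, inv_eq_of_mul_eq_one_right hsq]
  norm_num

lemma h_eq_cases {s t : ℝ} (hst : h s = h t) :
    (∃ k : ℤ, s = t + 4*k) ∨ (∃ k : ℤ, s = 2 - t + 4*k) := by
  have h1 : |4 * Int.fract ((s + 1) / 4) - 2| = |4 * Int.fract ((t + 1) / 4) - 2| := by
    rw [h, h] at hst; linarith
  rcases abs_eq_abs.mp h1 with h2 | h2
  · left
    have : Int.fract ((s+1)/4) = Int.fract ((t+1)/4) := by linarith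
    obtain ⟨z, hz⟩ := Int.fract_eq_fract.mp this
    exact ⟨z, by linarith⟩
  · right
    have hft : Int.fract ((s+1)/4) = 1 - Int.fract ((t+1)/4) := by linarith
    have h0 : Int.fract ((t+1)/4) ≠ 0 := by
      intro hc
      have := Int.fract_lt_one ((s+1)/4)
      rw [hft, hc] at this; linarith
    have es : (s+1)/4 = ⌊(s+1)/4⌋ + Int.fract ((s+1)/4) := by rw [Int.fract]; ring
    have et : (t+1)/4 = ⌊(t+1)/4⌋ + Int.fract ((t+1)/4) := by rw [Int.fract]; ring
    refine ⟨⌊(s+1)/4⌋ + ⌊(t+1)/4⌋, ?_⟩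
    push_cast
    rw [hft] at es
    linarith

/- ## Component lemmas for Z -/

lemma Z_apply0 (x : EuclideanSpace ℝ (Fin 3)) : Z x 0 = Real.exp (x 2) * h (x 0) := by
  simp [Z, vec3]

lemma Z_apply1 (x : EuclideanSpace ℝ (Fin 3)) : Z x 1 = Real.exp (x 2) * h (x 1) := by
  simp [Z, vec3]

lemma Z_apply2 (x : EuclideanSpace ℝ (Fin 3)) :
    Z x 2 = Real.exp (x 2) * (eps (x 0) * eps (x 1) * (1 - max |h (x 0)| |h (x 1)|)) := by
  simp [Z, vec3]

lemma Z_ext_translate {x y : EuclideanSpace ℝ (Fin 3)} (k l : ℤ)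
    (h0 : y 0 = x 0 + 4*k) (h1 : y 1 = x 1 + 4*l) (h2 : y 2 = x 2) : Z y = Z x := by
  ext i
  fin_cases i
  · show Z y 0 = Z x 0
    rw [Z_apply0, Z_apply0, h0, h2, h_add4]
  · show Z y 1 = Z x 1
    rw [Z_apply1, Z_apply1, h1, h2, h_add4]
  · show Z y 2 = Z x 2
    rw [Z_apply2, Z_apply2, h0, h1, h2, h_add4, h_add4, eps_add4, eps_add4]

lemma Z_ext_rho {x y : EuclideanSpace ℝ (Fin 3)} (k l : ℤ)
    (h0 : y 0 = 2 - x 0 + 4*k) (h1 : y 1 = 2 - x 1 + 4*l) (h2 : y 2 = x 2) : Z y = Z x := by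
  ext i
  fin_cases i
  · show Z y 0 = Z x 0
    rw [Z_apply0, Z_apply0, h0, h2, h_add4, h_two_sub]
  · show Z y 1 = Z x 1
    rw [Z_apply1, Z_apply1, h1, h2, h_add4, h_two_sub]
  · show Z y 2 = Z x 2
    rw [Z_apply2, Z_apply2, h0, h1, h2, h_add4, h_add4, h_two_sub, h_two_sub,
      eps_add4, eps_add4]
    congr 1
    rcases lt_or_eq_of_le (max_le (habs (x 0)) (habs (x 1))) with hM | hM
    · have hx0 : |h (x 0)| < 1 := lt_of_le_of_lt (le_max_left _ _) hM
      have hx1 : |h (x 1)| < 1 := lt_of_le_of_lt (le_max_right _ _) hM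
      rw [eps_two_sub hx0, eps_two_sub hx1]
      ring
    · rw [← hM]
      ring

/- ## Classification: Z a = Z b forces a, b to be related by group elements -/

lemma classify {a b : EuclideanSpace ℝ (Fin 3)} (hab : Z a = Z b) :
    b 2 = a 2 ∧ ∃ k l : ℤ,
      (b 0 = a 0 + 4*k ∧ b 1 = a 1 + 4*l) ∨
      (b 0 = 2 - a 0 + 4*k ∧ b 1 = 2 - a 1 + 4*l) := by
  have e0 : Real.exp (a 2) * h (a 0) = Real.exp (b 2) * h (b 0) := by
    rw [← Z_apply0, ← Z_apply0, hab]
  have e1 : Real.exp (a 2) * h (a 1) = Real.exp (b 2) * h (b 1) := by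
    rw [← Z_apply1, ← Z_apply1, hab]
  have e2 : Real.exp (a 2) * (eps (a 0) * eps (a 1) * (1 - max |h (a 0)| |h (a 1)|))
      = Real.exp (b 2) * (eps (b 0) * eps (b 1) * (1 - max |h (b 0)| |h (b 1)|)) := by
    rw [← Z_apply2, ← Z_apply2, hab]
  have hEa : (0:ℝ) < Real.exp (a 2) := Real.exp_pos _
  have hEb : (0:ℝ) < Real.exp (b 2) := Real.exp_pos _
  -- absolute values of the first two components
  have a0 : Real.exp (a 2) * |h (a 0)| = Real.exp (b 2) * |h (b 0)| := by
    rw [← abs_of_pos hEa, ← abs_mul, e0, abs_mul, abs_of_pos hEb]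
  have a1 : Real.exp (a 2) * |h (a 1)| = Real.exp (b 2) * |h (b 1)| := by
    rw [← abs_of_pos hEa, ← abs_mul, e1, abs_mul, abs_of_pos hEb]
  -- the max equation
  have amax : Real.exp (a 2) * max |h (a 0)| |h (a 1)|
      = Real.exp (b 2) * max |h (b 0)| |h (b 1)| := by
    rcases max_cases |h (a 0)| |h (a 1)| with ⟨hA, hA'⟩ | ⟨hA, hA'⟩ <;>
      rcases max_cases |h (b 0)| |h (b 1)| with ⟨hB, hB'⟩ | ⟨hB, hB'⟩ <;>
      rw [hA, hB] <;> nlinarith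
  -- the third component in absolute value
  have heps_a : |eps (a 0) * eps (a 1)| = 1 := by
    rw [abs_mul, eps_abs, eps_abs, mul_one]
  have heps_b : |eps (b 0) * eps (b 1)| = 1 := by
    rw [abs_mul, eps_abs, eps_abs, mul_one]
  have hMa1 : max |h (a 0)| |h (a 1)| ≤ 1 := max_le (habs _) (habs _)
  have hMb1 : max |h (b 0)| |h (b 1)| ≤ 1 := max_le (habs _) (habs _)
  have a2 : Real.exp (a 2) * (1 - max |h (a 0)| |h (a 1)|)
      = Real.exp (b 2) * (1 - max |h (b 0)| |h (b 1)|) := by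
    have := congrArg abs e2
    simp only [abs_mul, eps_abs, abs_of_pos hEa, abs_of_pos hEb, one_mul,
      abs_of_nonneg (by linarith : (0:ℝ) ≤ 1 - max |h (a 0)| |h (a 1)|),
      abs_of_nonneg (by linarith : (0:ℝ) ≤ 1 - max |h (b 0)| |h (b 1)|)] at this
    linarith
  -- exponentials agree
  have hE : Real.exp (a 2) = Real.exp (b 2) := by nlinarith
  have hx2 : b 2 = a 2 := (Real.exp_injective hE).symm
  rw [← hE] at e0 e1 e2 amax
  have hh0 : h (b 0) = h (a 0) := by
    have := mul_left_cancel₀ (ne_of_gt hEa) e0; linarith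
  have hh1 : h (b 1) = h (a 1) := by
    have := mul_left_cancel₀ (ne_of_gt hEa) e1; linarith
  have hM : max |h (b 0)| |h (b 1)| = max |h (a 0)| |h (a 1)| := by rw [hh0, hh1]
  have e2' : eps (a 0) * eps (a 1) * (1 - max |h (a 0)| |h (a 1)|)
      = eps (b 0) * eps (b 1) * (1 - max |h (a 0)| |h (a 1)|) := by
    have := mul_left_cancel₀ (ne_of_gt hEa) e2
    rw [hM] at this; linarith
  refine ⟨hx2, ?_⟩
  rcases h_eq_cases hh0 with ⟨k, hk⟩ | ⟨k, hk⟩ <;>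
    rcases h_eq_cases hh1 with ⟨l, hl⟩ | ⟨l, hl⟩
  · exact ⟨k, l, Or.inl ⟨hk, hl⟩⟩
  · -- translate in 0, reflect in 1
    rcases lt_or_eq_of_le hMa1 with hMlt | hMeq
    · exfalso
      have hx0 : |h (a 0)| < 1 := lt_of_le_of_lt (le_max_left _ _) hMlt
      have hx1 : |h (a 1)| < 1 := lt_of_le_of_lt (le_max_right _ _) hMlt
      have hb0 : eps (b 0) = eps (a 0) := by rw [hk]; exact eps_add4 _ _
      have hb1 : eps (b 1) = -eps (a 1) := by
        rw [hl, show (2:ℝ) - a 1 + 4*l = (2 - a 1) + 4*l by ring, eps_add4]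
        exact eps_two_sub hx1
      rw [hb0, hb1] at e2'
      have h1m : (0:ℝ) < 1 - max |h (a 0)| |h (a 1)| := by linarith
      have h0' : (eps (a 0) * eps (a 1)) * (1 - max |h (a 0)| |h (a 1)|) = 0 := by
        linear_combination e2' / 2
      have hPne : eps (a 0) * eps (a 1) ≠ 0 := by
        intro hq
        have hq2 : (eps (a 0) * eps (a 1)) * (eps (a 0) * eps (a 1)) = 1 := by
          rw [mul_mul_mul_comm, eps_sq, eps_sq, one_mul]
        rw [hq, mul_zero] at hq2
        norm_num at hq2
      rcases mul_eq_zero.mp h0' with hq | hq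
      · exact hPne hq
      · linarith
    · -- degenerate case: max = 1
      rcases max_choice |h (a 0)| |h (a 1)| with hc | hc
    -- note hMeq : max = 1 with direction: lt_or_eq_of_le gives max ≤ 1 → max = 1? direction!
      · -- |h (a 0)| = 1
        obtain ⟨n, hn⟩ := odd_of_h (by rw [← hc, ← hMeq])
        exact ⟨k + n, l, Or.inr ⟨by rw [hk, hn]; push_cast; ring, hl⟩⟩
      · obtain ⟨n, hn⟩ := odd_of_h (by rw [← hc, ← hMeq])
        exact ⟨k, l - n, Or.inl ⟨hk, by rw [hl, hn]; push_cast; ring⟩⟩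
  · -- reflect in 0, translate in 1
    rcases lt_or_eq_of_le hMa1 with hMlt | hMeq
    · exfalso
      have hx0 : |h (a 0)| < 1 := lt_of_le_of_lt (le_max_left _ _) hMlt
      have hx1 : |h (a 1)| < 1 := lt_of_le_of_lt (le_max_right _ _) hMlt
      have hb0 : eps (b 0) = -eps (a 0) := by
        rw [hk, show (2:ℝ) - a 0 + 4*k = (2 - a 0) + 4*k by ring, eps_add4]
        exact eps_two_sub hx0
      have hb1 : eps (b 1) = eps (a 1) := by rw [hl]; exact eps_add4 _ _
      rw [hb0, hb1] at e2'
      have h1m : (0:ℝ) < 1 - max |h (a 0)| |h (a 1)| := by linarith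
      have h0' : (eps (a 0) * eps (a 1)) * (1 - max |h (a 0)| |h (a 1)|) = 0 := by
        linear_combination e2' / 2
      have hPne : eps (a 0) * eps (a 1) ≠ 0 := by
        intro hq
        have hq2 : (eps (a 0) * eps (a 1)) * (eps (a 0) * eps (a 1)) = 1 := by
          rw [mul_mul_mul_comm, eps_sq, eps_sq, one_mul]
        rw [hq, mul_zero] at hq2
        norm_num at hq2
      rcases mul_eq_zero.mp h0' with hq | hq
      · exact hPne hq
      · linarith
    · rcases max_choice |h (a 0)| |h (a 1)| with hc | hc
      · obtain ⟨n, hn⟩ := odd_of_h (by rw [← hc, ← hMeq])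
        exact ⟨k - n, l, Or.inl ⟨by rw [hk, hn]; push_cast; ring, hl⟩⟩
      · obtain ⟨n, hn⟩ := odd_of_h (by rw [← hc, ← hMeq])
        exact ⟨k, l + n, Or.inr ⟨hk, by rw [hl, hn]; push_cast; ring⟩⟩
  · exact ⟨k, l, Or.inr ⟨hk, hl⟩⟩

/- ## Iterated translation property of g -/

lemma g_single (α : ℤ) (g : EuclideanSpace ℝ (Fin 3) → EuclideanSpace ℝ (Fin 3))
    (c : EuclideanSpace ℝ (Fin 3))
    (hc : ∀ x, g (x + c) = g x + (α : ℝ) • c) (k : ℤ) :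
    ∀ x, g (x + (k:ℝ) • c) = g x + ((α * k : ℤ):ℝ) • c := by
  induction k using Int.induction_on with
  | zero => intro x; simp
  | succ n ih =>
      intro x
      have e : x + (((n:ℤ)+1:ℤ):ℝ) • c = (x + ((n:ℤ):ℝ) • c) + c := by
        rw [show (((n:ℤ)+1:ℤ):ℝ) = ((n:ℤ):ℝ) + 1 by push_cast; ring, add_smul, one_smul]
        abel
      rw [e, hc, ih]
      rw [show ((α * ((n:ℤ)+1) : ℤ):ℝ) = ((α * (n:ℤ) : ℤ):ℝ) + (α:ℝ) by push_cast; ring,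
        add_smul]
      abel
  | pred n ih =>
      intro x
      have hc' : ∀ y, g (y - c) = g y - (α:ℝ) • c := by
        intro y
        have h1 := hc (y - c)
        have e2 : y - c + c = y := by abel
        rw [e2] at h1
        rw [h1]; abel
      have e : x + ((-(n:ℤ)-1:ℤ):ℝ) • c = (x + ((-(n:ℤ):ℤ):ℝ) • c) - c := by
        rw [show ((-(n:ℤ)-1:ℤ):ℝ) = ((-(n:ℤ):ℤ):ℝ) - 1 by push_cast; ring, sub_smul, one_smul]
        abel
      rw [e, hc', ih]
      rw [show ((α * (-(n:ℤ)-1) : ℤ):ℝ) = ((α * (-(n:ℤ)) : ℤ):ℝ) - (α:ℝ) by push_cast; ring,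
        sub_smul]
      abel

/- ## Main theorem -/

/-- Branch independence of the construction of F: if g satisfies (I) and (II),
    and T(x) = x - (1,1,0), then Z ∘ T ∘ g ∘ T⁻¹ takes the same value at any
    two points a, b with Z(a) = Z(b). -/
theorem branch_independence (α : ℤ) (g : EuclideanSpace ℝ (Fin 3) → EuclideanSpace ℝ (Fin 3))
    (hI : ∀ x : EuclideanSpace ℝ (Fin 3),
      ∀ c ∈ ({vec3 4 0 0, vec3 0 4 0} : Set (EuclideanSpace ℝ (Fin 3))),
        g (x + c) = g x + (α : ℝ) • c)
    (hII : ∀ x : EuclideanSpace ℝ (Fin 3), g (Rot 2 2 x) = Rot 2 2 (g x))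
    (a b : EuclideanSpace ℝ (Fin 3)) (hab : Z a = Z b) :
    Z (g (a + vec3 1 1 0) - vec3 1 1 0) = Z (g (b + vec3 1 1 0) - vec3 1 1 0) := by
  obtain ⟨hx2, k, l, hcase⟩ := classify hab
  have hg1 : ∀ (m : ℤ) x, g (x + (m:ℝ) • vec3 4 0 0) = g x + ((α * m : ℤ):ℝ) • vec3 4 0 0 :=
    fun m x => g_single α g _ (fun y => hI y _ (Or.inl rfl)) m x
  have hg2 : ∀ (m : ℤ) x, g (x + (m:ℝ) • vec3 0 4 0) = g x + ((α * m : ℤ):ℝ) • vec3 0 4 0 :=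
    fun m x => g_single α g _ (fun y => hI y _ (Or.inr rfl)) m x
  rcases hcase with ⟨hb0, hb1⟩ | ⟨hb0, hb1⟩
  · -- translation case
    have hbv : b + vec3 1 1 0
        = (a + vec3 1 1 0) + (k:ℝ) • vec3 4 0 0 + (l:ℝ) • vec3 0 4 0 := by
      ext i
      fin_cases i <;> simp [vec3] <;> [rw [hb0]; rw [hb1]; rw [hx2]] <;> ring
    rw [hbv, hg2, hg1]
    refine (Z_ext_translate (α*k) (α*l) ?_ ?_ ?_).symm
    · simp [vec3]; ring
    · simp [vec3]; ring
    · simp [vec3]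
  · -- rotation case
    have hbv : b + vec3 1 1 0
        = Rot 2 2 (a + vec3 1 1 0) + (k:ℝ) • vec3 4 0 0 + (l:ℝ) • vec3 0 4 0 := by
      ext i
      fin_cases i <;> simp [vec3, Rot] <;> [rw [hb0]; rw [hb1]; rw [hx2]] <;> ring
    rw [hbv, hg2, hg1, hII]
    refine (Z_ext_rho (α*k) (α*l) ?_ ?_ ?_).symm
    · simp [vec3, Rot]; ring
    · simp [vec3, Rot]; ring
    · simp [vec3, Rot]
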